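/- Let n, m be positive integers, F an n×n real matrix, G an n×m real matrix, Q a symmetric n×n real matrix, S an n×m real matrix, R a symmetric positive-definite m×m real matrix, P a symmetric n×n real matrix satisfying the Algebraic Riccati Equation FᵀP + PF + Q = (PG + S)R⁻¹(PG + S)ᵀ, and K = −R⁻¹(PG + S)ᵀ. Suppose z : [0,∞) → ℝⁿ is differentiable, u : [0,∞) → ℝᵐ is continuous, ż(t) = Fz(t) + Gu(t) for all t ≥ 0, z(t) → 0 as t → ∞, and both t ↦ z(t)ᵀQz(t) + 2z(t)ᵀSu(t) + u(t)ᵀRu(t) and t ↦ (u(t) − Kz(t))ᵀR(u(t) − Kz(t)) are integrable on [0,∞). Then (1/2)∫₀^∞ (z(t)ᵀQz(t) + 2z(t)ᵀSu(t) + u(t)ᵀRu(t)) dt = (1/2)z(0)ᵀPz(0) + (1/2)∫₀^∞ (u(t) − Kz(t))ᵀR(u(t) − Kz(t)) dt. -/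

import Mathlib

open Matrix MeasureTheory Filter

lemma dot_transpose_mulVec {n m : ℕ} (A : Matrix (Fin n) (Fin m) ℝ)
    (a : Fin m → ℝ) (b : Fin n → ℝ) :
    a ⬝ᵥ (Aᵀ).mulVec b = b ⬝ᵥ A.mulVec a := by
  rw [dotProduct_mulVec, vecMul_transpose, dotProduct_comm]

lemma mulVec_dot {n m : ℕ} (A : Matrix (Fin n) (Fin m) ℝ)
    (a : Fin m → ℝ) (b : Fin n → ℝ) :
    (A.mulVec a) ⬝ᵥ b = a ⬝ᵥ (Aᵀ).mulVec b := by
  rw [dotProduct_comm, dot_transpose_mulVec]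

lemma key_pointwise {n m : ℕ}
    (F P Q : Matrix (Fin n) (Fin n) ℝ)
    (G S : Matrix (Fin n) (Fin m) ℝ)
    (R : Matrix (Fin m) (Fin m) ℝ)
    (K : Matrix (Fin m) (Fin n) ℝ)
    (hR : R.IsSymm) (hRpd : R.PosDef) (hP : P.IsSymm)
    (hARE : Fᵀ * P + P * F + Q = (P * G + S) * R⁻¹ * (P * G + S)ᵀ)
    (hK : K = -(R⁻¹ * (P * G + S)ᵀ))
    (x : Fin n → ℝ) (y : Fin m → ℝ) :
    x ⬝ᵥ Q.mulVec x + 2 * (x ⬝ᵥ S.mulVec y) + y ⬝ᵥ R.mulVec y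
      + ((F.mulVec x + G.mulVec y) ⬝ᵥ P.mulVec x
        + x ⬝ᵥ P.mulVec (F.mulVec x + G.mulVec y))
    = (y - K.mulVec x) ⬝ᵥ R.mulVec (y - K.mulVec x) := by
  set M := P * G + S with hM
  have hRinv : R * R⁻¹ = 1 :=
    Matrix.mul_nonsing_inv _ (isUnit_iff_ne_zero.mpr hRpd.det_pos.ne')
  have hRK : R * K = -Mᵀ := by
    rw [hK, Matrix.mul_neg, ← Matrix.mul_assoc, hRinv, Matrix.one_mul]
  have hKT : Kᵀ = -(M * R⁻¹) := by
    rw [hK, transpose_neg, transpose_mul, transpose_transpose,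
      transpose_nonsing_inv, hR.eq]
  have hKRK : Kᵀ * (R * K) = Fᵀ * P + P * F + Q := by
    rw [hRK, hKT, Matrix.neg_mul, Matrix.mul_neg, neg_neg, Matrix.mul_assoc]
    exact (hARE.trans (Matrix.mul_assoc _ _ _)).symm
  have h1 : y ⬝ᵥ R.mulVec (K.mulVec x) = -(x ⬝ᵥ M.mulVec y) := by
    rw [mulVec_mulVec, hRK, neg_mulVec, dotProduct_neg, dot_transpose_mulVec]
  have h2 : (K.mulVec x) ⬝ᵥ R.mulVec y = -(x ⬝ᵥ M.mulVec y) := by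
    rw [← hR.eq, dot_transpose_mulVec]
    exact h1
  have h3 : (K.mulVec x) ⬝ᵥ R.mulVec (K.mulVec x)
      = x ⬝ᵥ (Fᵀ * P + P * F + Q).mulVec x := by
    rw [mulVec_dot, mulVec_mulVec, mulVec_mulVec, Matrix.mul_assoc, hKRK]
  have hL1 : (F.mulVec x) ⬝ᵥ P.mulVec x = x ⬝ᵥ (Fᵀ * P).mulVec x := by
    rw [mulVec_dot, mulVec_mulVec]
  have hL2 : (G.mulVec y) ⬝ᵥ P.mulVec x = x ⬝ᵥ (P * G).mulVec y := by
    rw [mulVec_dot, mulVec_mulVec, ← dot_transpose_mulVec, transpose_mul,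
      transpose_transpose, hP.eq]
  rw [add_dotProduct, hL1, hL2, mulVec_add, dotProduct_add, mulVec_mulVec,
    mulVec_mulVec, sub_dotProduct, mulVec_sub, dotProduct_sub, dotProduct_sub,
    h1, h2, h3]
  simp only [hM, add_mulVec, dotProduct_add, Matrix.add_mul, add_dotProduct]
  ring

lemma deriv_quadform {n : ℕ} (P : Matrix (Fin n) (Fin n) ℝ)
    (z : ℝ → Fin n → ℝ) (z' : Fin n → ℝ) (t : ℝ) (hz : HasDerivAt z z' t) :
    HasDerivAt (fun s => z s ⬝ᵥ P.mulVec (z s))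
      (z' ⬝ᵥ P.mulVec (z t) + z t ⬝ᵥ P.mulVec z') t := by
  have h := hasDerivAt_pi.mp hz
  simp only [dotProduct, mulVec, Finset.sum_add_distrib.symm]
  apply HasDerivAt.fun_sum
  intro i _
  have hin : HasDerivAt (fun s => (fun w : Fin n → ℝ => ∑ j, P i j * w j) (z s))
      (∑ j, P i j * z' j) t := by
    simp only
    apply HasDerivAt.fun_sum
    intro j _
    exact (h j).const_mul (P i j)
  exact ((h i).mul hin)

theorem lqr_completing_square_integral_identity
    (n m : ℕ) (hn : 0 < n) (hm : 0 < m)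
    (F P Q : Matrix (Fin n) (Fin n) ℝ)
    (G S : Matrix (Fin n) (Fin m) ℝ)
    (R : Matrix (Fin m) (Fin m) ℝ)
    (K : Matrix (Fin m) (Fin n) ℝ)
    (hQ : Q.IsSymm) (hR : R.IsSymm) (hRpd : R.PosDef) (hP : P.IsSymm)
    (hARE : Fᵀ * P + P * F + Q = (P * G + S) * R⁻¹ * (P * G + S)ᵀ)
    (hK : K = -(R⁻¹ * (P * G + S)ᵀ))
    (z : ℝ → Fin n → ℝ) (u : ℝ → Fin m → ℝ)
    (hz : ∀ t ∈ Set.Ici (0:ℝ),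
      HasDerivAt z (F.mulVec (z t) + G.mulVec (u t)) t)
    (hu : ContinuousOn u (Set.Ici (0:ℝ)))
    (hlim : Tendsto z atTop (nhds 0))
    (hint1 : IntegrableOn
      (fun t => z t ⬝ᵥ Q.mulVec (z t) + 2 * (z t ⬝ᵥ S.mulVec (u t))
        + u t ⬝ᵥ R.mulVec (u t)) (Set.Ici (0:ℝ)))
    (hint2 : IntegrableOn
      (fun t => (u t - K.mulVec (z t)) ⬝ᵥ R.mulVec (u t - K.mulVec (z t)))
      (Set.Ici (0:ℝ))) :
    (1/2 : ℝ) * ∫ t in Set.Ici (0:ℝ),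
        (z t ⬝ᵥ Q.mulVec (z t) + 2 * (z t ⬝ᵥ S.mulVec (u t))
          + u t ⬝ᵥ R.mulVec (u t))
    = (1/2 : ℝ) * (z 0 ⬝ᵥ P.mulVec (z 0))
      + (1/2 : ℝ) * ∫ t in Set.Ici (0:ℝ),
          ((u t - K.mulVec (z t)) ⬝ᵥ R.mulVec (u t - K.mulVec (z t))) := by
  set V : ℝ → ℝ := fun t => z t ⬝ᵥ P.mulVec (z t) with hVdef
  set V' : ℝ → ℝ := fun t =>
    (F.mulVec (z t) + G.mulVec (u t)) ⬝ᵥ P.mulVec (z t)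
      + z t ⬝ᵥ P.mulVec (F.mulVec (z t) + G.mulVec (u t)) with hV'def
  have hder : ∀ t ∈ Set.Ici (0:ℝ), HasDerivAt V (V' t) t := fun t ht =>
    deriv_quadform P z _ t (hz t ht)
  have hkey : ∀ t, z t ⬝ᵥ Q.mulVec (z t) + 2 * (z t ⬝ᵥ S.mulVec (u t))
      + u t ⬝ᵥ R.mulVec (u t) + V' t
      = (u t - K.mulVec (z t)) ⬝ᵥ R.mulVec (u t - K.mulVec (z t)) :=
    fun t => key_pointwise F P Q G S R K hR hRpd hP hARE hK (z t) (u t)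
  have hV'int : IntegrableOn V' (Set.Ici (0:ℝ)) := by
    have hfun2 : V' = fun t =>
        ((u t - K.mulVec (z t)) ⬝ᵥ R.mulVec (u t - K.mulVec (z t)))
        - (z t ⬝ᵥ Q.mulVec (z t) + 2 * (z t ⬝ᵥ S.mulVec (u t))
          + u t ⬝ᵥ R.mulVec (u t)) := funext fun t => by
      have := hkey t; linarith
    rw [hfun2]; exact hint2.sub hint1
  have htend : Tendsto V atTop (nhds 0) := by
    have hc : Continuous fun v : Fin n → ℝ => v ⬝ᵥ P.mulVec v := by
      simp only [dotProduct, mulVec]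
      exact continuous_finset_sum _ fun i _ =>
        (continuous_apply i).mul (continuous_finset_sum _ fun j _ =>
          continuous_const.mul (continuous_apply j))
    have h0 : ((0 : Fin n → ℝ) ⬝ᵥ P.mulVec 0) = 0 := by simp
    have := (hc.tendsto (0 : Fin n → ℝ)).comp hlim
    rwa [h0] at this
  have hIoi : ∫ t in Set.Ioi (0:ℝ), V' t = 0 - V 0 :=
    integral_Ioi_of_hasDerivAt_of_tendsto' hder
      (hV'int.mono_set Set.Ioi_subset_Ici_self) htend
  have hIci : ∫ t in Set.Ici (0:ℝ), V' t = - V 0 := by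
    rw [integral_Ici_eq_integral_Ioi, hIoi]; ring
  have hfun : (fun t => z t ⬝ᵥ Q.mulVec (z t) + 2 * (z t ⬝ᵥ S.mulVec (u t))
      + u t ⬝ᵥ R.mulVec (u t))
      = fun t => ((u t - K.mulVec (z t)) ⬝ᵥ R.mulVec (u t - K.mulVec (z t)))
        - V' t := funext fun t => by have := hkey t; linarith
  rw [hfun, integral_sub hint2 hV'int, hIci]
  have hV0 : V 0 = z 0 ⬝ᵥ P.mulVec (z 0) := rfl
  rw [hV0]
  ring
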